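/- Let $w_{\min}, w_{\max} > 0$ with $w_{\min} \le w_{\max}$ and $p \in \mathbb{N}$. There exists a constant $C > 0$, depending only on $p$, $w_{\min}$, and $w_{\max}$, such that for all polynomials $q, \widetilde w$ of degree at most $p$ on $[0,1]$ with $w_{\min} \le \widetilde w(t) \le w_{\max}$ for all $t \in [0,1]$, the rational function $V = q/\widetilde w$ satisfies the inverse inequality $\|V'\|_{L^2(0,1)} \le C \|V\|_{L^2(0,1)}$. -/

import Mathlib

open MeasureTheory Polynomial Set Function
open scoped ENNReal

-- integrability of polynomial products
lemma InvIneqAux.polyInt (q r : Polynomial ℝ) :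
    IntervalIntegrable (fun t => q.eval t * r.eval t) volume 0 1 :=
  (q.continuous.mul r.continuous).intervalIntegrable _ _

-- definiteness of the L² inner product on polynomials
lemma InvIneqAux.definite {q : Polynomial ℝ}
    (h : (∫ t in (0:ℝ)..1, q.eval t * q.eval t) = 0) : q = 0 := by
  by_contra hq
  have hpos : 0 < ∫ t in (0:ℝ)..1, q.eval t * q.eval t := by
    rw [intervalIntegral.integral_pos_iff_support_of_nonneg_ae
      (Filter.Eventually.of_forall fun t => mul_self_nonneg _) (InvIneqAux.polyInt q q)]
    refine ⟨one_pos, ?_⟩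
    have hroots : volume {x : ℝ | q.IsRoot x} = 0 :=
      (Polynomial.finite_setOf_isRoot hq).measure_zero _
    have hsub : Set.Ioc (0:ℝ) 1 \ {x : ℝ | q.IsRoot x} ⊆
        Function.support (fun t => q.eval t * q.eval t) ∩ Set.Ioc 0 1 := by
      intro t ht
      refine ⟨?_, ht.1⟩
      have : ¬ q.IsRoot t := ht.2
      simp only [Function.mem_support]
      exact mul_ne_zero this this
    have h1 : volume (Set.Ioc (0:ℝ) 1 \ {x : ℝ | q.IsRoot x}) = 1 := by
      rw [measure_diff_null hroots]
      simp
    calc (0:ℝ≥0∞) < 1 := by norm_num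
      _ = volume (Set.Ioc (0:ℝ) 1 \ {x : ℝ | q.IsRoot x}) := h1.symm
      _ ≤ _ := measure_mono hsub
  exact absurd h hpos.ne'


lemma InvIneqAux.arith {c A M2 C12 Ig Iq Iq' IV : ℝ}
    (hc : 0 ≤ c) (hA : 0 ≤ A) (hM2 : 0 ≤ M2) (hC12 : 0 ≤ C12)
    (h5 : Ig ≤ c * (A * Iq' + M2 * Iq)) (h6 : Iq' ≤ C12 * Iq) (h7 : Iq ≤ A * IV) :
    Ig ≤ c * (A * C12 + M2) * A * IV := by
  have e1 := mul_le_mul_of_nonneg_left h6 (mul_nonneg hc hA)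
  have e2 := mul_le_mul_of_nonneg_left h7
    (mul_nonneg hc (add_nonneg (mul_nonneg hA hC12) hM2))
  nlinarith [e1, e2]

set_option maxHeartbeats 1600000 in
/-- Inverse inequality for rational functions on the reference interval: for
polynomials `q, w` of degree at most `p` with `wmin ≤ w ≤ wmax` on `[0,1]`, the
rational function `V = q/w` satisfies `‖V'‖_{L²(0,1)} ≤ C ‖V‖_{L²(0,1)}` with a
constant depending only on `p`, `wmin`, `wmax`. -/
theorem inverse_inequality_rational
    (p : ℕ) (wmin wmax : ℝ) (hmin : 0 < wmin) (hle : wmin ≤ wmax) :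
    ∃ C > (0 : ℝ), ∀ q w : Polynomial ℝ,
      q.natDegree ≤ p → w.natDegree ≤ p →
      (∀ t ∈ Set.Icc (0 : ℝ) 1, wmin ≤ w.eval t ∧ w.eval t ≤ wmax) →
      Real.sqrt (∫ t in (0 : ℝ)..1, (deriv (fun s : ℝ => q.eval s / w.eval s) t) ^ 2)
        ≤ C * Real.sqrt (∫ t in (0 : ℝ)..1, (q.eval t / w.eval t) ^ 2) := by
  classical
  set E := Polynomial.degreeLT ℝ (p + 1) with hEdef
  letI core : InnerProductSpace.Core ℝ E :=
  { inner := fun x y => ∫ t in (0:ℝ)..1, (x : ℝ[X]).eval t * (y : ℝ[X]).eval t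
    conj_inner_symm := fun x y => by
      simp only [starRingEnd_apply, star_trivial]
      exact intervalIntegral.integral_congr fun t _ => mul_comm _ _
    re_inner_nonneg := fun x => by
      simpa using intervalIntegral.integral_nonneg zero_le_one
        (fun t _ => mul_self_nonneg ((x : ℝ[X]).eval t))
    add_left := fun x y z => by
      simp only [Submodule.coe_add, Polynomial.eval_add, add_mul]
      exact intervalIntegral.integral_add (InvIneqAux.polyInt _ _) (InvIneqAux.polyInt _ _)
    smul_left := fun x y r => by
      simp only [SetLike.val_smul, Polynomial.eval_smul, smul_eq_mul, mul_assoc,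
        starRingEnd_apply, star_trivial]
      exact intervalIntegral.integral_const_mul r _
    definite := fun x hx => Subtype.ext (InvIneqAux.definite hx) }
  letI : NormedAddCommGroup E := core.toNormedAddCommGroup
  letI : InnerProductSpace ℝ E := InnerProductSpace.ofCore core.toCore
  haveI : FiniteDimensional ℝ E := Module.Finite.equiv (Polynomial.degreeLTEquiv ℝ (p + 1)).symm
  have hnorm : ∀ x : E, ‖x‖ = Real.sqrt (∫ t in (0:ℝ)..1, ((x : ℝ[X]).eval t) ^ 2) := by
    intro x
    rw [@norm_eq_sqrt_real_inner ↥E _ _ x]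
    congr 1
    exact intervalIntegral.integral_congr fun t _ => (pow_two _).symm
  -- derivative map
  have hmemD : ∀ x : E, Polynomial.derivative (x : ℝ[X]) ∈ E := by
    intro x
    have hx := Polynomial.mem_degreeLT.mp x.2
    exact Polynomial.mem_degreeLT.mpr (lt_of_le_of_lt Polynomial.degree_derivative_le hx)
  let D : E →ₗ[ℝ] E :=
    LinearMap.codRestrict E ((Polynomial.derivative (R := ℝ)).comp E.subtype) hmemD
  let S : E →ₗ[ℝ] C(Set.Icc (0:ℝ) 1, ℝ) :=
    ((Polynomial.toContinuousMapOnAlgHom (Set.Icc (0:ℝ) 1)).toLinearMap).comp E.subtype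
  obtain ⟨C1, hC1pos, hC1⟩ : ∃ C > (0:ℝ), ∀ x : E, ‖D x‖ ≤ C * ‖x‖ := by
    refine ⟨‖LinearMap.toContinuousLinearMap D‖ + 1, by positivity, fun x => ?_⟩
    have := (LinearMap.toContinuousLinearMap D).le_opNorm x
    calc ‖D x‖ = ‖(LinearMap.toContinuousLinearMap D) x‖ := rfl
      _ ≤ ‖LinearMap.toContinuousLinearMap D‖ * ‖x‖ := this
      _ ≤ (‖LinearMap.toContinuousLinearMap D‖ + 1) * ‖x‖ := by
          have := norm_nonneg x; nlinarith
  obtain ⟨C2, hC2pos, hC2⟩ : ∃ C > (0:ℝ), ∀ (x : E) (t : ℝ), t ∈ Set.Icc (0:ℝ) 1 →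
      |(x : ℝ[X]).eval t| ≤ C * ‖x‖ := by
    refine ⟨‖LinearMap.toContinuousLinearMap S‖ + 1, by positivity, fun x t ht => ?_⟩
    have h1 : |(x : ℝ[X]).eval t| ≤ ‖S x‖ := by
      have := (S x).norm_coe_le_norm ⟨t, ht⟩
      simpa [S, Real.norm_eq_abs] using this
    have h2 : ‖S x‖ ≤ ‖LinearMap.toContinuousLinearMap S‖ * ‖x‖ :=
      (LinearMap.toContinuousLinearMap S).le_opNorm x
    have := norm_nonneg x
    calc |(x : ℝ[X]).eval t| ≤ ‖LinearMap.toContinuousLinearMap S‖ * ‖x‖ := h1.trans h2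
      _ ≤ (‖LinearMap.toContinuousLinearMap S‖ + 1) * ‖x‖ := by nlinarith
    -- constants
  have hwmax : 0 < wmax := lt_of_lt_of_le hmin hle
  set M := C2 * (C1 * wmax) with hMdef
  set K := 2 / wmin ^ 4 * (wmax ^ 2 * C1 ^ 2 + M ^ 2) * wmax ^ 2 with hKdef
  have hKpos : 0 < K := by positivity
  refine ⟨Real.sqrt K, Real.sqrt_pos.mpr hKpos, ?_⟩
  intro q w hq hw hbound
  have hmemq : q ∈ E := by
    rw [hEdef, Polynomial.mem_degreeLT]
    calc q.degree ≤ (q.natDegree : WithBot ℕ) := Polynomial.degree_le_natDegree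
      _ < ((p + 1 : ℕ) : WithBot ℕ) := by exact_mod_cast Nat.lt_succ_of_le hq
  have hmemw : w ∈ E := by
    rw [hEdef, Polynomial.mem_degreeLT]
    calc w.degree ≤ (w.natDegree : WithBot ℕ) := Polynomial.degree_le_natDegree
      _ < ((p + 1 : ℕ) : WithBot ℕ) := by exact_mod_cast Nat.lt_succ_of_le hw
  set qE : E := ⟨q, hmemq⟩ with hqE
  set wE : E := ⟨w, hmemw⟩ with hwE
  set q' := Polynomial.derivative q with hq'def
  set w' := Polynomial.derivative w with hw'def
  have hwpos : ∀ t ∈ Set.Icc (0:ℝ) 1, 0 < w.eval t :=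
    fun t ht => lt_of_lt_of_le hmin (hbound t ht).1
  -- nonnegativity of the integrals
  have hIqnn : 0 ≤ ∫ t in (0:ℝ)..1, (q.eval t) ^ 2 :=
    intervalIntegral.integral_nonneg zero_le_one fun t _ => sq_nonneg _
  have hIq'nn : 0 ≤ ∫ t in (0:ℝ)..1, (q'.eval t) ^ 2 :=
    intervalIntegral.integral_nonneg zero_le_one fun t _ => sq_nonneg _
  have hIVnn : 0 ≤ ∫ t in (0:ℝ)..1, (q.eval t / w.eval t) ^ 2 :=
    intervalIntegral.integral_nonneg zero_le_one fun t _ => sq_nonneg _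
  -- inverse estimate for the polynomial q
  have hIq'sqrt : Real.sqrt (∫ t in (0:ℝ)..1, (q'.eval t) ^ 2)
      ≤ C1 * Real.sqrt (∫ t in (0:ℝ)..1, (q.eval t) ^ 2) := by
    have h := hC1 qE
    rw [hnorm, hnorm] at h
    exact h
  have hIq' : (∫ t in (0:ℝ)..1, (q'.eval t) ^ 2)
      ≤ C1 ^ 2 * ∫ t in (0:ℝ)..1, (q.eval t) ^ 2 := by
    have h2 := pow_le_pow_left₀ (Real.sqrt_nonneg _) hIq'sqrt 2
    rw [Real.sq_sqrt hIq'nn, mul_pow, Real.sq_sqrt hIqnn] at h2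
    exact h2
  -- bound for the norm of w
  have hwnorm : ‖wE‖ ≤ wmax := by
    rw [hnorm]
    have hle2 : (∫ t in (0:ℝ)..1, (w.eval t) ^ 2) ≤ wmax ^ 2 := by
      have h := intervalIntegral.integral_mono_on zero_le_one
        ((w.continuous.pow 2).intervalIntegrable 0 1)
        (intervalIntegrable_const (μ := MeasureTheory.volume) (c := wmax ^ 2))
        (fun t ht => by show (w.eval t) ^ 2 ≤ wmax ^ 2; nlinarith [(hbound t ht).1, (hbound t ht).2])
      simpa using h
    calc Real.sqrt (∫ t in (0:ℝ)..1, (w.eval t) ^ 2) ≤ Real.sqrt (wmax ^ 2) :=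
          Real.sqrt_le_sqrt hle2
      _ = wmax := Real.sqrt_sq hwmax.le
  -- sup bound for w'
  have hMw : ∀ t ∈ Set.Icc (0:ℝ) 1, |w'.eval t| ≤ M := by
    intro t ht
    have h1 : |w'.eval t| ≤ C2 * ‖D wE‖ := hC2 (D wE) t ht
    have h2 : C2 * ‖D wE‖ ≤ C2 * (C1 * ‖wE‖) :=
      mul_le_mul_of_nonneg_left (hC1 wE) hC2pos.le
    have h3 : C2 * (C1 * ‖wE‖) ≤ M := by rw [hMdef]; gcongr
    exact h1.trans (h2.trans h3)
  -- ∫ q² ≤ wmax² ∫ V²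
  have hVint : IntervalIntegrable (fun t => (q.eval t / w.eval t) ^ 2) volume 0 1 := by
    apply ContinuousOn.intervalIntegrable
    rw [Set.uIcc_of_le zero_le_one]
    exact ((q.continuous.continuousOn.div w.continuous.continuousOn
      (fun t ht => (hwpos t ht).ne')).pow 2)
  have hqle : (∫ t in (0:ℝ)..1, (q.eval t) ^ 2)
      ≤ wmax ^ 2 * ∫ t in (0:ℝ)..1, (q.eval t / w.eval t) ^ 2 := by
    rw [← intervalIntegral.integral_const_mul]
    apply intervalIntegral.integral_mono_on zero_le_one
      ((q.continuous.pow 2).intervalIntegrable 0 1) (hVint.const_mul _)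
    intro t ht
    have h1 := hwpos t ht
    have h2 := (hbound t ht).2
    have hkey : (q.eval t / w.eval t) ^ 2 * (w.eval t) ^ 2 = (q.eval t) ^ 2 := by
      rw [div_pow, div_mul_cancel₀]
      exact pow_ne_zero 2 h1.ne'
    show (q.eval t) ^ 2 ≤ _
    rw [← hkey]
    have hWsq : (w.eval t) ^ 2 ≤ wmax ^ 2 := by nlinarith [(hbound t ht).1]
    have h8 := mul_le_mul_of_nonneg_left hWsq (sq_nonneg (q.eval t / w.eval t))
    nlinarith [h8]
  -- rewrite the derivative
  have hderiv : ∀ t ∈ Set.uIcc (0:ℝ) 1, deriv (fun s : ℝ => q.eval s / w.eval s) t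
      = (q'.eval t * w.eval t - q.eval t * w'.eval t) / (w.eval t) ^ 2 := by
    intro t ht
    rw [Set.uIcc_of_le zero_le_one] at ht
    exact ((q.hasDerivAt t).div (w.hasDerivAt t) (hwpos t ht).ne').deriv
  have hIderiv : (∫ t in (0:ℝ)..1, (deriv (fun s : ℝ => q.eval s / w.eval s) t) ^ 2)
      = ∫ t in (0:ℝ)..1,
        ((q'.eval t * w.eval t - q.eval t * w'.eval t) / (w.eval t) ^ 2) ^ 2 :=
    intervalIntegral.integral_congr fun t ht => by rw [hderiv t ht]
  -- integrability of the rewritten integrand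
  have hgint : IntervalIntegrable
      (fun t => ((q'.eval t * w.eval t - q.eval t * w'.eval t) / (w.eval t) ^ 2) ^ 2)
      volume 0 1 := by
    apply ContinuousOn.intervalIntegrable
    rw [Set.uIcc_of_le zero_le_one]
    exact ((((q'.continuous.mul w.continuous).sub
        (q.continuous.mul w'.continuous)).continuousOn.div
      ((w.continuous.pow 2).continuousOn)
      (fun t ht => pow_ne_zero 2 (hwpos t ht).ne')).pow 2)
  have hhint1 : IntervalIntegrable (fun t => wmax ^ 2 * (q'.eval t) ^ 2) volume 0 1 :=
    (continuous_const.mul (q'.continuous.pow 2)).intervalIntegrable 0 1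
  have hhint2 : IntervalIntegrable (fun t => M ^ 2 * (q.eval t) ^ 2) volume 0 1 :=
    (continuous_const.mul (q.continuous.pow 2)).intervalIntegrable 0 1
  -- pointwise bound
  have hpt : ∀ t ∈ Set.Icc (0:ℝ) 1,
      ((q'.eval t * w.eval t - q.eval t * w'.eval t) / (w.eval t) ^ 2) ^ 2
        ≤ 2 / wmin ^ 4 * (wmax ^ 2 * (q'.eval t) ^ 2 + M ^ 2 * (q.eval t) ^ 2) := by
    intro t ht
    obtain ⟨hW1, hW2⟩ := hbound t ht
    obtain ⟨hl, hr⟩ := abs_le.mp (hMw t ht)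
    have hMnn : 0 ≤ M := (abs_nonneg _).trans (hMw t ht)
    set a := q'.eval t
    set b := q.eval t
    set W := w.eval t
    set W' := w'.eval t
    have hW'sq : W' ^ 2 ≤ M ^ 2 := by nlinarith
    have hWsq : W ^ 2 ≤ wmax ^ 2 := by nlinarith
    have h4 : wmin ^ 4 ≤ (W ^ 2) ^ 2 := by
      calc wmin ^ 4 ≤ W ^ 4 := pow_le_pow_left₀ hmin.le hW1 4
        _ = (W ^ 2) ^ 2 := by ring
    have e2 : a ^ 2 * W ^ 2 ≤ a ^ 2 * wmax ^ 2 :=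
      mul_le_mul_of_nonneg_left hWsq (sq_nonneg a)
    have e3 : b ^ 2 * W' ^ 2 ≤ b ^ 2 * M ^ 2 :=
      mul_le_mul_of_nonneg_left hW'sq (sq_nonneg b)
    have hnum : (a * W - b * W') ^ 2 ≤ 2 * (wmax ^ 2 * a ^ 2 + M ^ 2 * b ^ 2) := by
      nlinarith [sq_nonneg (a * W + b * W'), e2, e3]
    rw [div_pow]
    calc (a * W - b * W') ^ 2 / ((W ^ 2) ^ 2)
        ≤ (2 * (wmax ^ 2 * a ^ 2 + M ^ 2 * b ^ 2)) / wmin ^ 4 :=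
          div_le_div₀ (by positivity) hnum (by positivity) h4
      _ = 2 / wmin ^ 4 * (wmax ^ 2 * a ^ 2 + M ^ 2 * b ^ 2) := by ring
  -- integrate the pointwise bound
  have hmono : (∫ t in (0:ℝ)..1,
        ((q'.eval t * w.eval t - q.eval t * w'.eval t) / (w.eval t) ^ 2) ^ 2)
      ≤ ∫ t in (0:ℝ)..1,
        2 / wmin ^ 4 * (wmax ^ 2 * (q'.eval t) ^ 2 + M ^ 2 * (q.eval t) ^ 2) :=
    intervalIntegral.integral_mono_on zero_le_one hgint
      (((hhint1.add hhint2).const_mul _)) hpt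
  have hval : (∫ t in (0:ℝ)..1,
        2 / wmin ^ 4 * (wmax ^ 2 * (q'.eval t) ^ 2 + M ^ 2 * (q.eval t) ^ 2))
      = 2 / wmin ^ 4 * (wmax ^ 2 * (∫ t in (0:ℝ)..1, (q'.eval t) ^ 2)
          + M ^ 2 * ∫ t in (0:ℝ)..1, (q.eval t) ^ 2) := by
    rw [intervalIntegral.integral_const_mul, intervalIntegral.integral_add hhint1 hhint2,
      intervalIntegral.integral_const_mul, intervalIntegral.integral_const_mul]
  -- final numeric chain
  have hfinal : (∫ t in (0:ℝ)..1,
        ((q'.eval t * w.eval t - q.eval t * w'.eval t) / (w.eval t) ^ 2) ^ 2)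
      ≤ K * ∫ t in (0:ℝ)..1, (q.eval t / w.eval t) ^ 2 := by
    have h5 := hmono.trans_eq hval
    rw [hKdef]
    exact InvIneqAux.arith (by positivity) (by positivity) (sq_nonneg M) (sq_nonneg C1)
      h5 hIq' hqle
  rw [hIderiv]
  calc Real.sqrt (∫ t in (0:ℝ)..1,
        ((q'.eval t * w.eval t - q.eval t * w'.eval t) / (w.eval t) ^ 2) ^ 2)
      ≤ Real.sqrt (K * ∫ t in (0:ℝ)..1, (q.eval t / w.eval t) ^ 2) :=
        Real.sqrt_le_sqrt hfinal
    _ = Real.sqrt K * Real.sqrt (∫ t in (0:ℝ)..1, (q.eval t / w.eval t) ^ 2) :=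
        Real.sqrt_mul hKpos.le _
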